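/- Let G be a finite group and let N be a subnormal subgroup of G that is simple and non-abelian. If H is a subgroup of G with N ⊆ H and every non-abelian chief factor of H is simple, then the normal closure of N in H is a minimal normal subgroup of H equal to N; in particular N is normal in H. -/

import Mathlib

/-- `N` is a minimal normal subgroup of `G`. -/
def IsMinimalNormal {G : Type*} [Group G] (N : Subgroup G) : Prop :=
  N.Normal ∧ N ≠ ⊥ ∧ ∀ M : Subgroup G, M.Normal → M ≤ N → M = ⊥ ∨ M = N

/-- Every non-abelian chief factor of `G` is simple. -/
def SCGroup (G : Type*) [Group G] : Prop :=
  ∀ (U V : Subgroup G) [U.Normal] [V.Normal], V < U →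
    IsMinimalNormal (U.map (QuotientGroup.mk' V)) →
    (¬ ∀ x y : (U.map (QuotientGroup.mk' V)), x * y = y * x) →
    IsSimpleGroup (U.map (QuotientGroup.mk' V))

/-- `N` is subnormal in `G`: there is a chain `N = N₀ ⊴ N₁ ⊴ ⋯ ⊴ N_k = G`. -/
def IsSubnormal {G : Type*} [Group G] (N : Subgroup G) : Prop :=
  ∃ (n : ℕ) (c : Fin (n + 1) → Subgroup G), c 0 = N ∧ c (Fin.last n) = ⊤ ∧
    ∀ i : Fin n, c i.castSucc ≤ c i.succ ∧ ((c i.castSucc).subgroupOf (c i.succ)).Normal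

section

open Subgroup
open scoped commutatorElement

/-- An elementwise-normal subnormal chain. -/
def ChainRel {X : Type*} [Group X] (n : ℕ) (c : ℕ → Subgroup X) : Prop :=
  ∀ i < n, c i ≤ c (i + 1) ∧ ∀ g ∈ c (i + 1), ∀ a ∈ c i, g * a * g⁻¹ ∈ c i

/-- Subnormality via elementwise chains. -/
def Subn {X : Type*} [Group X] (N : Subgroup X) : Prop :=
  ∃ n c, c 0 = N ∧ c n = ⊤ ∧ ChainRel n c

lemma chain_mono {X : Type*} [Group X] {n : ℕ} {c : ℕ → Subgroup X}
    (hc : ChainRel n c) {i j : ℕ} (hij : i ≤ j) (hj : j ≤ n) : c i ≤ c j := by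
  induction j with
  | zero => simp_all
  | succ j ih =>
    rcases Nat.lt_or_ge i (j+1) with h | h
    · exact le_trans (ih (by omega) (by omega)) (hc j (by omega)).1
    · have : i = j + 1 := by omega
      simp [this]

lemma subn_of_isSubnormal {X : Type*} [Group X] {N : Subgroup X}
    (h : _root_.IsSubnormal N) : Subn N := by
  obtain ⟨n, c, h0, hn, hc⟩ := h
  refine ⟨n, fun i => if hi : i ≤ n then c ⟨i, by omega⟩ else ⊤, by simpa using h0, ?_, ?_⟩
  · simp only [le_refl, dif_pos]
    simpa [Fin.last] using hn
  · intro i hi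
    have h1 : i ≤ n := by omega
    have h2 : i + 1 ≤ n := by omega
    obtain ⟨hle, hnorm⟩ := hc ⟨i, hi⟩
    have e1 : (Fin.castSucc ⟨i, hi⟩ : Fin (n+1)) = ⟨i, by omega⟩ := rfl
    have e2 : (Fin.succ ⟨i, hi⟩ : Fin (n+1)) = ⟨i+1, by omega⟩ := rfl
    rw [e1, e2] at hle hnorm
    simp only [h1, h2, dif_pos]
    exact ⟨hle, fun g hg a ha => (normal_subgroupOf_iff hle).mp hnorm a g ha hg⟩

lemma subn_subgroupOf {X : Type*} [Group X] {N H : Subgroup X}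
    (h : Subn N) (hNH : N ≤ H) : Subn (N.subgroupOf H) := by
  obtain ⟨n, c, h0, hn, hc⟩ := h
  refine ⟨n, fun i => (c i).subgroupOf H, by show (c 0).subgroupOf H = _; rw [h0], by show (c n).subgroupOf H = _; rw [hn]; exact top_subgroupOf H, ?_⟩
  intro i hi
  obtain ⟨hle, hnorm⟩ := hc i hi
  refine ⟨fun x hx => hle hx, fun g hg a ha => ?_⟩
  simp only [mem_subgroupOf] at *
  simpa using hnorm _ hg _ ha

lemma subn_map {X Y : Type*} [Group X] [Group Y] (f : X →* Y)
    (hf : Function.Surjective f) {N : Subgroup X} (h : Subn N) : Subn (N.map f) := by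
  obtain ⟨n, c, h0, hn, hc⟩ := h
  refine ⟨n, fun i => (c i).map f, by show (c 0).map f = _; rw [h0], by show (c n).map f = _; rw [hn, ← MonoidHom.range_eq_map,
    MonoidHom.range_eq_top.mpr hf], ?_⟩
  intro i hi
  obtain ⟨hle, hnorm⟩ := hc i hi
  refine ⟨map_mono hle, ?_⟩
  rintro g hg a ha
  obtain ⟨x, hx, rfl⟩ := hg
  obtain ⟨y, hy, rfl⟩ := ha
  exact ⟨x * y * x⁻¹, hnorm x hx y hy, by simp⟩

lemma subn_eq_top_of_simple {X : Type*} [Group X] [hX : IsSimpleGroup X]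
    {A : Subgroup X} (h : Subn A) (hA : A ≠ ⊥) : A = ⊤ := by
  obtain ⟨n, c, h0, hn, hc⟩ := h
  have key : ∀ k, k ≤ n → c (n - k) = ⊤ := by
    intro k
    induction k with
    | zero => simpa using hn
    | succ k ih =>
      intro hk
      have htop : c (n - k) = ⊤ := ih (by omega)
      have hstep : n - (k+1) + 1 = n - k := by omega
      obtain ⟨hle, hnorm⟩ := hc (n - (k+1)) (by omega)
      rw [hstep, htop] at hnorm
      have : (c (n - (k+1))).Normal := ⟨fun a ha g => hnorm g trivial a ha⟩
      rcases this.eq_bot_or_eq_top with hbot | htop'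
      · exfalso
        exact hA (le_bot_iff.mp (hbot ▸ (h0 ▸ chain_mono hc (Nat.zero_le _) (by omega))))
      · exact htop'
  have := key n le_rfl
  simp only [Nat.sub_self] at this
  rw [← h0, this]

lemma comm_of_commutator_bot {X : Type*} [Group X] {A B : Subgroup X}
    (h : ⁅A, B⁆ = ⊥) {a b : X} (ha : a ∈ A) (hb : b ∈ B) : a * b = b * a := by
  have : ⁅a, b⁆ ∈ ⁅A, B⁆ := commutator_mem_commutator ha hb
  rw [h, mem_bot] at this
  exact commutatorElement_eq_one_iff_mul_comm.mp this

/-- Key lemma: a perfect subgroup `N` subnormal in `T` (witnessed by a chain of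
length `n`) centralizes every normal subgroup `M` of `T` with `N ⊓ M = ⊥`. -/
lemma key_comm {X : Type*} [Group X] : ∀ (n : ℕ) (N M T : Subgroup X) (c : ℕ → Subgroup X),
    c 0 = N → c n = T → ChainRel n c → M ≤ T →
    (∀ g ∈ T, ∀ m ∈ M, g * m * g⁻¹ ∈ M) → N ⊓ M = ⊥ → ⁅N, N⁆ = N → ⁅N, M⁆ = ⊥ := by
  intro n
  induction n with
  | zero =>
    intro N M T c h0 hn _ hMT _ hNM _
    have hTN : T = N := by rw [← h0, hn]
    have : M = ⊥ := by
      rw [← hNM, eq_comm, inf_eq_right]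
      exact hTN ▸ hMT
    rw [this, commutator_bot_right]
  | succ n ih =>
    intro N M T c h0 hn hc hMT hMnorm hNM hperf
    set S : Set X := {x | ∃ g ∈ T, ∃ a ∈ N, x = g * a * g⁻¹} with hS
    set K : Subgroup X := Subgroup.closure S with hK
    have hNT : N ≤ T := h0 ▸ hn ▸ chain_mono hc (Nat.zero_le _) le_rfl
    have hNK : N ≤ K := by
      intro a ha
      exact subset_closure ⟨1, T.one_mem, a, ha, by simp⟩
    have hKcn : K ≤ c n := by
      apply (closure_le _).mpr
      rintro x ⟨g, hg, a, ha, rfl⟩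
      have haN : a ∈ c n := chain_mono hc (Nat.zero_le _) (by omega) (h0 ▸ ha)
      exact (hc n (by omega)).2 g (hn ▸ hg) a haN
    have hKT : K ≤ T := le_trans hKcn (hn ▸ chain_mono hc (by omega) le_rfl)
    have hKnorm : ∀ t ∈ T, ∀ k ∈ K, t * k * t⁻¹ ∈ K := by
      intro t ht k hk
      induction hk using closure_induction with
      | mem x hx =>
        obtain ⟨g, hg, a, ha, rfl⟩ := hx
        exact subset_closure ⟨t * g, T.mul_mem ht hg, a, ha, by group⟩
      | one => simpa using K.one_mem
      | mul x y hx hy ihx ihy =>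
        have : t * (x * y) * t⁻¹ = (t * x * t⁻¹) * (t * y * t⁻¹) := by group
        rw [this]; exact K.mul_mem ihx ihy
      | inv x hx ihx =>
        have : t * x⁻¹ * t⁻¹ = (t * x * t⁻¹)⁻¹ := by group
        rw [this]; exact K.inv_mem ihx
    have h0' : c 0 ⊓ K = N := by rw [h0]; exact inf_eq_left.mpr hNK
    have hn' : c n ⊓ K = K := inf_eq_right.mpr hKcn
    have hc' : ChainRel n (fun i => c i ⊓ K) := by
      intro i hi
      refine ⟨inf_le_inf_right _ (hc i (by omega)).1, ?_⟩
      rintro g ⟨hg1, hg2⟩ a ⟨ha1, ha2⟩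
      exact ⟨(hc i (by omega)).2 g hg1 a ha1, hKnorm g (hKT hg2) a ha2⟩
    have hM'norm : ∀ g ∈ K, ∀ m ∈ M ⊓ K, g * m * g⁻¹ ∈ M ⊓ K := by
      rintro g hg m ⟨hm1, hm2⟩
      exact ⟨hMnorm g (hKT hg) m hm1, hKnorm g (hKT hg) m hm2⟩
    have hNM' : N ⊓ (M ⊓ K) = ⊥ := by
      rw [eq_bot_iff, ← hNM]
      exact le_inf inf_le_left (le_trans inf_le_right inf_le_left)
    have hIH : ⁅N, M ⊓ K⁆ = ⊥ :=
      ih N (M ⊓ K) K (fun i => c i ⊓ K) h0' hn' hc' inf_le_right hM'norm hNM' hperf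
    have hNMle : ⁅N, M⁆ ≤ M ⊓ K := by
      rw [commutator_le]
      intro g1 hg1 g2 hg2
      constructor
      · have : ⁅g1, g2⁆ = (g1 * g2 * g1⁻¹) * g2⁻¹ := by group
        rw [this]
        exact M.mul_mem (hMnorm g1 (hNT hg1) g2 hg2) (M.inv_mem hg2)
      · have : ⁅g1, g2⁆ = g1 * (g2 * g1⁻¹ * g2⁻¹) := by group
        rw [this]
        exact K.mul_mem (hNK hg1)
          (subset_closure ⟨g2, hMT hg2, g1⁻¹, N.inv_mem hg1, rfl⟩)
    have h1 : ⁅⁅N, M⁆, N⁆ = ⊥ := by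
      rw [eq_bot_iff, ← hIH, commutator_comm N (M ⊓ K)]
      exact commutator_mono hNMle le_rfl
    have h2 : ⁅⁅M, N⁆, N⁆ = ⊥ := by
      rw [commutator_comm M N]
      exact h1
    have := commutator_commutator_eq_bot_of_rotate h1 h2
    rwa [hperf] at this


lemma perfect_of_simple {X : Type*} [Group X] (N : Subgroup X)
    (hsimple : IsSimpleGroup N) (hnab : ¬ ∀ x y : N, x * y = y * x) : ⁅N, N⁆ = N := by
  haveI := hsimple
  have hD : (commutator ↥N).Normal := inferInstance
  rcases hD.eq_bot_or_eq_top with hbot | htop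
  · exfalso
    apply hnab
    intro x y
    have : ⁅x, y⁆ ∈ commutator ↥N := commutator_mem_commutator (mem_top x) (mem_top y)
    rw [hbot, mem_bot] at this
    exact commutatorElement_eq_one_iff_mul_comm.mp this
  · have h1 : (commutator ↥N).map N.subtype = ⁅N, N⁆ := by
      rw [_root_.commutator_def, map_commutator, ← MonoidHom.range_eq_map, N.range_subtype]
    rw [← h1, htop, ← MonoidHom.range_eq_map, N.range_subtype]

lemma commutator_mul_right_cancel {X : Type*} [Group X] {a b v : X}
    (h : v * b = b * v) : ⁅a * v, b⁆ = ⁅a, b⁆ := by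
  have h' : v * b * v⁻¹ = b := by rw [h, mul_inv_cancel_right]
  calc ⁅a * v, b⁆ = a * (v * b * v⁻¹) * a⁻¹ * b⁻¹ := by
        rw [commutatorElement_def]; group
    _ = a * b * a⁻¹ * b⁻¹ := by rw [h']
    _ = ⁅a, b⁆ := (commutatorElement_def a b).symm

lemma commutator_mul_right_cancel' {X : Type*} [Group X] {a b v : X}
    (h : v * a = a * v) : ⁅a, b * v⁆ = ⁅a, b⁆ := by
  have h' : v * a⁻¹ * v⁻¹ = a⁻¹ := by
    have h2 : v * a⁻¹ = a⁻¹ * v := by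
      have h3 : a * (v * a⁻¹) = a * (a⁻¹ * v) := by
        rw [← mul_assoc, ← h]; group
      exact mul_left_cancel h3
    rw [h2, mul_inv_cancel_right]
  calc ⁅a, b * v⁆ = a * b * (v * a⁻¹ * v⁻¹) * b⁻¹ := by
        rw [commutatorElement_def]; group
    _ = a * b * a⁻¹ * b⁻¹ := by rw [h']
    _ = ⁅a, b⁆ := (commutatorElement_def a b).symm


theorem main_normal {X : Type*} [Group X] [Finite X] (N : Subgroup X)
    (hs : Subn N) (hsimple : IsSimpleGroup N)
    (hnab : ¬ ∀ x y : N, x * y = y * x) (hSC : SCGroup X) : N.Normal := by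
  haveI := hsimple
  have hNbot : N ≠ ⊥ := by
    intro h
    apply hnab
    intro x y
    have hx : (x : X) = 1 := by simpa using h.le x.2
    have hy : (y : X) = 1 := by simpa using h.le y.2
    apply Subtype.ext
    simp [hx, hy]
  set K := Subgroup.normalClosure (N : Set X) with hKdef
  haveI hKnormal : K.Normal := Subgroup.normalClosure_normal
  have hNK : N ≤ K := Subgroup.le_normalClosure
  have hKbot : K ≠ ⊥ := fun h => hNbot (le_bot_iff.mp (h ▸ hNK))
  haveI : Finite (Subgroup X) :=
    Finite.of_injective (fun (s : Subgroup X) => (s : Set X)) SetLike.coe_injective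
  obtain ⟨V, ⟨hVnormal, hVltK⟩, hVmax⟩ :=
    Set.Finite.exists_maximalFor id {V : Subgroup X | V.Normal ∧ V < K} (Set.toFinite _)
      ⟨⊥, ⟨inferInstance, bot_lt_iff_ne_bot.mpr hKbot⟩⟩
  haveI := hVnormal
  simp only [id] at hVmax
  have hNV : N ⊓ V = ⊥ := by
    have hnormal : ((N ⊓ V).subgroupOf N).Normal := by
      rw [normal_subgroupOf_iff inf_le_left]
      rintro a k ⟨h1, h2⟩ hk
      exact ⟨N.mul_mem (N.mul_mem hk h1) (N.inv_mem hk), hVnormal.conj_mem a h2 k⟩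
    rcases hnormal.eq_bot_or_eq_top with hb | ht
    · rw [subgroupOf_eq_bot] at hb
      rw [eq_bot_iff]
      exact fun x hx => hb.le_bot ⟨hx, hx.1⟩
    · rw [subgroupOf_eq_top] at ht
      exfalso
      have hNleV : N ≤ V := le_trans ht inf_le_right
      exact (lt_iff_le_not_ge.mp hVltK).2
        (Subgroup.normalClosure_le_normal hNleV)
  set π := QuotientGroup.mk' V with hπ
  have hπsurj : Function.Surjective π := QuotientGroup.mk'_surjective V
  have hkerπ : π.ker = V := QuotientGroup.ker_mk' V
  haveI hKbN : (K.map π).Normal := hKnormal.map π hπsurj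
  have hKnleV : ¬ K ≤ V := (lt_iff_le_not_ge.mp hVltK).2
  have hKbne : K.map π ≠ ⊥ := by
    rw [Ne, Subgroup.map_eq_bot_iff, hkerπ]
    exact hKnleV
  have hmin : IsMinimalNormal (K.map π) := by
    refine ⟨hKbN, hKbne, ?_⟩
    intro M' hM'n hM'le
    have hWn : (M'.comap π).Normal := hM'n.comap π
    have hVW : V ≤ M'.comap π := by
      intro v hv
      have hv1 : π v = 1 := by rwa [← MonoidHom.mem_ker, hkerπ]
      rw [Subgroup.mem_comap, hv1]
      exact M'.one_mem
    have hWK : M'.comap π ≤ K := by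
      calc M'.comap π ≤ (K.map π).comap π := comap_mono hM'le
        _ = K ⊔ π.ker := Subgroup.comap_map_eq (f := π) K
        _ = K := by rw [hkerπ]; exact sup_eq_left.mpr hVltK.le
    rcases eq_or_ne (M'.comap π) K with hWKeq | hWKne
    · right
      rw [← map_comap_eq_self_of_surjective hπsurj M', hWKeq]
    · left
      have hWlt : M'.comap π < K := lt_of_le_of_ne hWK hWKne
      have hVeq := le_antisymm hVW (hVmax (j := M'.comap π) ⟨hWn, hWlt⟩ hVW)
      rw [← map_comap_eq_self_of_surjective hπsurj M', ← hVeq, Subgroup.map_eq_bot_iff, hkerπ]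
  have hnabQ : ¬ ∀ x y : (K.map π), x * y = y * x := by
    intro hcomm
    push_neg at hnab
    obtain ⟨a, b, hab⟩ := hnab
    have hamem : π ↑a ∈ K.map π := ⟨a, hNK a.2, rfl⟩
    have hbmem : π ↑b ∈ K.map π := ⟨b, hNK b.2, rfl⟩
    have h0 := hcomm ⟨π ↑a, hamem⟩ ⟨π ↑b, hbmem⟩
    have h0' := congrArg Subtype.val h0
    simp only [MulMemClass.coe_mul] at h0'
    have h1 : π (↑a * ↑b) = π (↑b * ↑a) := by simpa using h0'
    have h2 : ((↑a * ↑b : X)⁻¹ * (↑b * ↑a)) ∈ π.ker := by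
      rw [MonoidHom.mem_ker, map_mul, map_inv, h1, inv_mul_cancel]
    rw [hkerπ] at h2
    have h3 : ((↑a * ↑b : X)⁻¹ * (↑b * ↑a)) ∈ N :=
      N.mul_mem (N.inv_mem (N.mul_mem a.2 b.2)) (N.mul_mem b.2 a.2)
    have h4 : ((↑a * ↑b : X)⁻¹ * (↑b * ↑a)) ∈ N ⊓ V := ⟨h3, h2⟩
    rw [hNV, mem_bot] at h4
    have h5 : (↑a * ↑b : X) = ↑b * ↑a := by
      have h6 := congrArg (fun z => (↑a * ↑b : X) * z) h4
      simpa [mul_assoc] using h6.symm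
    exact hab (Subtype.ext (by simpa using h5))
  haveI hKQsimple : IsSimpleGroup (K.map π) := hSC K V hVltK hmin hnabQ
  have hNbmem : (N.map π) ≤ K.map π := map_mono hNK
  have hNbbot : N.map π ≠ ⊥ := by
    rw [Ne, Subgroup.map_eq_bot_iff, hkerπ]
    intro h
    exact hNbot (by rw [← hNV]; exact (inf_eq_left.mpr h).symm)
  have hA : (N.map π).subgroupOf (K.map π) = ⊤ := by
    apply subn_eq_top_of_simple (subn_subgroupOf (subn_map π hπsurj hs) hNbmem)
    rw [Ne, subgroupOf_eq_bot]
    intro hdis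
    exact hNbbot (le_bot_iff.mp (le_trans (le_inf le_rfl hNbmem) hdis.le_bot))
  have hNbKb : N.map π = K.map π := le_antisymm hNbmem (subgroupOf_eq_top.mp hA)
  have hK : N ⊔ V = K := by
    have hcg := congrArg (Subgroup.comap π) hNbKb
    rwa [comap_map_eq, comap_map_eq, hkerπ, sup_eq_left.mpr hVltK.le] at hcg
  have hperf : ⁅N, N⁆ = N := perfect_of_simple N hsimple hnab
  have hVnormT : ∀ g ∈ (⊤ : Subgroup X), ∀ m ∈ V, g * m * g⁻¹ ∈ V :=
    fun g _ m hm => hVnormal.conj_mem m hm g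
  have hNVc : ⁅N, V⁆ = ⊥ := by
    obtain ⟨n, c, h0, hn, hc⟩ := hs
    exact key_comm n N V ⊤ c h0 hn hc le_top hVnormT hNV hperf
  have hcent : ∀ h : X, ⁅N.map (MulAut.conj h).toMonoidHom, V⁆ = ⊥ := by
    intro h
    have hfs : Function.Surjective (MulAut.conj h).toMonoidHom := (MulAut.conj h).surjective
    obtain ⟨n, c, h0, hn, hc⟩ := subn_map (MulAut.conj h).toMonoidHom hfs hs
    refine key_comm n _ V ⊤ c h0 hn hc le_top hVnormT ?_ ?_
    · rw [eq_bot_iff]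
      rintro x ⟨⟨y, hy, rfl⟩, hxV⟩
      have hy' : h⁻¹ * ((MulAut.conj h).toMonoidHom y) * h⁻¹⁻¹ ∈ V := hVnormal.conj_mem _ hxV h⁻¹
      have heq : h⁻¹ * ((MulAut.conj h).toMonoidHom y) * h⁻¹⁻¹ = y := by
        simp only [MulEquiv.coe_toMonoidHom, MulAut.conj_apply]
        group
      rw [heq] at hy'
      have hyb : y ∈ N ⊓ V := ⟨hy, hy'⟩
      rw [hNV, mem_bot] at hyb
      simp [hyb]
    · rw [← map_commutator, hperf]
  constructor
  intro a ha h
  have hsub : N.map (MulAut.conj h).toMonoidHom ≤ N := by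
    have hperfh : ⁅N.map (MulAut.conj h).toMonoidHom, N.map (MulAut.conj h).toMonoidHom⁆
        = N.map (MulAut.conj h).toMonoidHom := by rw [← map_commutator, hperf]
    rw [← hperfh, commutator_le]
    intro x1 hx1 x2 hx2
    have hNfK : N.map (MulAut.conj h).toMonoidHom ≤ K := by
      rintro x ⟨y, hy, rfl⟩
      simpa using hKnormal.conj_mem y (hNK hy) h
    have hdecomp : ∀ x ∈ K, ∃ nn v, nn ∈ N ∧ v ∈ V ∧ nn * v = x := by
      intro x hx
      have hx' : x ∈ (↑(N ⊔ V) : Set X) := by rw [hK]; exact hx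
      rw [Subgroup.mul_normal N V] at hx'
      obtain ⟨nn, hnn, v, hv, heq⟩ := hx'
      exact ⟨nn, v, hnn, hv, heq⟩
    obtain ⟨n1, v1, hn1, hv1, he1⟩ := hdecomp x1 (hNfK hx1)
    obtain ⟨n2, v2, hn2, hv2, he2⟩ := hdecomp x2 (hNfK hx2)
    have hcx2 : ∀ v ∈ V, Commute x2 v :=
      fun v hv => comm_of_commutator_bot (hcent h) hx2 hv
    have hcn1 : ∀ v ∈ V, Commute n1 v := fun v hv => comm_of_commutator_bot hNVc hn1 hv
    have hcn2 : ∀ v ∈ V, Commute n2 v := fun v hv => comm_of_commutator_bot hNVc hn2 hv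
    have hcv2 : ∀ v ∈ V, Commute v2 v := by
      intro v hv
      have : Commute (n2⁻¹ * x2) v := Commute.mul_left (hcn2 v hv).inv_left (hcx2 v hv)
      rwa [← he2, inv_mul_cancel_left] at this
    have hcomm1 : v1 * x2 = x2 * v1 := by
      rw [← he2]
      exact (((hcn2 v1 hv1).symm).mul_right ((hcv2 v1 hv1).symm)).eq
    have hcomm2 : v2 * n1 = n1 * v2 := ((hcn1 v2 hv2).symm).eq
    have hstep : ⁅x1, x2⁆ = ⁅n1, n2⁆ := by
      rw [← he1, commutator_mul_right_cancel hcomm1, ← he2,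
        commutator_mul_right_cancel' hcomm2]
    rw [hstep, ← hperf]
    exact commutator_mem_commutator hn1 hn2
  have : (MulAut.conj h).toMonoidHom a ∈ N := hsub ⟨a, ha, rfl⟩
  simpa using this

end

/-- If `N` is a subnormal non-abelian simple subgroup of a finite group `G`,
and `H` is a subgroup with `N ≤ H` all of whose non-abelian chief factors are
simple, then the normal closure of `N` in `H` is a minimal normal subgroup of
`H` equal to `N`; in particular `N` is normal in `H`. -/
theorem stmt1 {G : Type} [Group G] [Finite G]
    (N : Subgroup G) (hsub : IsSubnormal N)
    (hsimple : IsSimpleGroup N) (hnonab : ¬ ∀ x y : N, x * y = y * x)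
    (H : Subgroup G) (hNH : N ≤ H) (hSC : SCGroup H) :
    IsMinimalNormal (Subgroup.normalClosure ((N.subgroupOf H : Subgroup H) : Set H)) ∧
    Subgroup.normalClosure ((N.subgroupOf H : Subgroup H) : Set H) = N.subgroupOf H ∧
    (N.subgroupOf H).Normal := by
  haveI := hsimple
  have hs' : Subn (N.subgroupOf H) := subn_subgroupOf (subn_of_isSubnormal hsub) hNH
  have e : ↥(N.subgroupOf H) ≃* ↥N := Subgroup.subgroupOfEquivOfLe hNH
  haveI hNontriv' : Nontrivial ↥(N.subgroupOf H) := e.toEquiv.nontrivial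
  haveI hsimple' : IsSimpleGroup ↥(N.subgroupOf H) :=
    IsSimpleGroup.isSimpleGroup_of_surjective e.symm.toMonoidHom e.symm.surjective
  have hnab' : ¬ ∀ x y : ↥(N.subgroupOf H), x * y = y * x := by
    intro hc
    apply hnonab
    intro x y
    have h1 := hc (e.symm x) (e.symm y)
    have h2 : e.symm (x * y) = e.symm (y * x) := by rw [map_mul, map_mul, h1]
    exact e.symm.injective h2
  have hnormal : (N.subgroupOf H).Normal := main_normal _ hs' hsimple' hnab' hSC
  haveI := hnormal
  have hclosure : Subgroup.normalClosure ((N.subgroupOf H : Subgroup H) : Set H)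
      = N.subgroupOf H := Subgroup.normalClosure_eq_self _
  have hbot : N.subgroupOf H ≠ ⊥ := by
    intro h
    apply hnab'
    intro x y
    have hx : (x : ↥H) = 1 := by simpa using h.le x.2
    have hy : (y : ↥H) = 1 := by simpa using h.le y.2
    exact Subtype.ext (by simp [hx, hy])
  refine ⟨⟨by rw [hclosure]; exact hnormal, by rw [hclosure]; exact hbot, ?_⟩,
    hclosure, hnormal⟩
  intro M hMn hMle
  rw [hclosure] at hMle
  have hsubOf : (M.subgroupOf (N.subgroupOf H)).Normal := by
    rw [Subgroup.normal_subgroupOf_iff hMle]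
    intro m k hm _
    exact hMn.conj_mem m hm k
  rcases hsubOf.eq_bot_or_eq_top with hb | ht
  · left
    rw [Subgroup.subgroupOf_eq_bot] at hb
    exact le_bot_iff.mp (le_trans (le_inf le_rfl hMle) hb.le_bot)
  · right
    rw [Subgroup.subgroupOf_eq_top] at ht
    rw [hclosure]
    exact le_antisymm hMle ht
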